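/- In a minimum-length covering strategy S = (W_1,...,W_k) for a tree T, the edge set of each walk W_i decomposes into the edges of a path P(W_i) (each traversed exactly once by robot i) and the edges of a forest F(W_i) (each traversed exactly twice by robot i and by no other robot). -/

import Mathlib

open Finset

variable {V : Type*}

/-- The list of consecutive steps of a walk given as a list of vertices. -/
def wsteps (W : List V) : List (V × V) := W.zip W.tail

/-- A walk on a graph: a nonempty list of vertices in which consecutive
entries are equal or adjacent. -/
def IsWalk (G : SimpleGraph V) (W : List V) : Prop :=
  W ≠ [] ∧ ∀ p ∈ wsteps W, p.1 = p.2 ∨ G.Adj p.1 p.2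

/-- The length of a walk: the number of position-changing moves. -/
def wlen [DecidableEq V] (W : List V) : ℕ :=
  (wsteps W).countP (fun p => decide (p.1 ≠ p.2))

/-- The number of times a walk traverses the edge `{x, y}` (in either direction). -/
def trav [DecidableEq V] (W : List V) (x y : V) : ℕ :=
  (wsteps W).countP (fun p => decide ((p.1 = x ∧ p.2 = y) ∨ (p.1 = y ∧ p.2 = x)))

/-- The number of times a walk traverses the edge `(x, y)` from `x` to `y`. -/
def dirTrav [DecidableEq V] (W : List V) (x y : V) : ℕ :=
  (wsteps W).countP (fun p => decide (p.1 = x ∧ p.2 = y))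

/-- A tuple of walks covers the graph: every vertex appears in some walk. -/
def Covers {k : ℕ} (S : Fin k → List V) : Prop := ∀ v : V, ∃ i, v ∈ S i

/-- The total length of a strategy: the sum of the lengths of the walks. -/
def slen [DecidableEq V] {k : ℕ} (S : Fin k → List V) : ℕ := ∑ i, wlen (S i)

/-- A minimum-length covering strategy: a tuple of walks covering all vertices whose
total length is no larger than that of any covering strategy with the same starts. -/
def IsMinCover [DecidableEq V] (G : SimpleGraph V) {k : ℕ} (S : Fin k → List V) : Prop :=
  (∀ i, IsWalk G (S i)) ∧ Covers S ∧
    ∀ S' : Fin k → List V, (∀ i, IsWalk G (S' i)) → Covers S' →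
      (∀ i, (S' i).head? = (S i).head?) → slen S ≤ slen S'

section Helpers

set_option linter.unusedSectionVars false

variable {V : Type*}

def scount (p : V × V → Bool) (W : List V) : ℕ := (wsteps W).countP p

@[simp] lemma wsteps_nil : wsteps ([] : List V) = [] := rfl
@[simp] lemma wsteps_single (a : V) : wsteps [a] = [] := rfl
@[simp] lemma wsteps_cons₂ (a b : V) (l : List V) :
    wsteps (a :: b :: l) = (a, b) :: wsteps (b :: l) := rfl

@[simp] lemma scount_nil (p : V × V → Bool) : scount p ([] : List V) = 0 := rfl
@[simp] lemma scount_single (p : V × V → Bool) (a : V) : scount p [a] = 0 := rfl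

lemma scount_cons₂ (p : V × V → Bool) (a b : V) (l : List V) :
    scount p (a :: b :: l) = (if p (a, b) then 1 else 0) + scount p (b :: l) := by
  simp [scount, List.countP_cons, Nat.add_comm]

lemma wsteps_append (A : List V) (b : V) (B : List V) :
    wsteps (A ++ b :: B) = wsteps (A ++ [b]) ++ wsteps (b :: B) := by
  induction A with
  | nil => simp
  | cons a A ih =>
    cases A with
    | nil => simp
    | cons a' A' =>
      simp only [List.cons_append, wsteps_cons₂] at *
      rw [ih]

lemma scount_append_cons (p : V × V → Bool) (A : List V) (b : V) (B : List V) :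
    scount p (A ++ b :: B) = scount p (A ++ [b]) + scount p (b :: B) := by
  unfold scount
  rw [wsteps_append, List.countP_append]

lemma scount_concat (p : V × V → Bool) {A : List V} {a : V} (h : A.getLast? = some a) (b : V) :
    scount p (A ++ [b]) = scount p A + (if p (a, b) then 1 else 0) := by
  induction A with
  | nil => simp at h
  | cons c A ih =>
    cases A with
    | nil =>
      simp only [List.getLast?_singleton, Option.some.injEq] at h
      subst h
      simp [scount_cons₂]
    | cons c' A' =>
      rw [List.getLast?_cons_cons] at h
      have := ih h
      simp only [List.cons_append] at *
      rw [scount_cons₂, scount_cons₂, this]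
      omega

lemma scount_reverse (p : V × V → Bool) (hp : ∀ u v, p (u, v) = p (v, u)) :
    ∀ l : List V, scount p l.reverse = scount p l
  | [] => by simp
  | [a] => by simp
  | a :: b :: l => by
    have ih := scount_reverse p hp (b :: l)
    have h1 : (b :: l).reverse.getLast? = some b := by
      rw [List.getLast?_reverse]; rfl
    have : (a :: b :: l).reverse = (b :: l).reverse ++ [a] := by simp
    rw [this, scount_concat p h1 a, ih, scount_cons₂, hp b a]
    omega

lemma mem_of_mem_wsteps : ∀ {W : List V} {q : V × V}, q ∈ wsteps W → q.1 ∈ W ∧ q.2 ∈ W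
  | [], q, h => by simp at h
  | [a], q, h => by simp at h
  | a :: b :: l, q, h => by
    rw [wsteps_cons₂, List.mem_cons] at h
    rcases h with rfl | h
    · simp
    · have := mem_of_mem_wsteps h
      exact ⟨List.mem_cons_of_mem _ this.1, List.mem_cons_of_mem _ this.2⟩

lemma split_one {x y : V} : ∀ {W : List V}, (x, y) ∈ wsteps W → ∃ A C, W = A ++ x :: y :: C
  | [], h => by simp at h
  | [a], h => by simp at h
  | a :: b :: l, h => by
    rw [wsteps_cons₂, List.mem_cons] at h
    rcases h with h | h
    · rw [Prod.mk.injEq] at h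
      obtain ⟨rfl, rfl⟩ := h
      exact ⟨[], l, rfl⟩
    · obtain ⟨A, C, hAC⟩ := split_one h
      exact ⟨a :: A, C, by rw [List.cons_append, ← hAC]⟩

end Helpers

section Helpers2

set_option linter.unusedSectionVars false

variable {V : Type*} [DecidableEq V]

lemma split_two {x y : V} (hxy : x ≠ y) : ∀ {W : List V}, 2 ≤ (wsteps W).count (x, y) →
    ∃ A M C, W = A ++ x :: y :: (M ++ x :: y :: C)
  | [], h => by simp at h
  | [a], h => by simp at h
  | a :: b :: l, h => by
    rw [wsteps_cons₂] at h
    by_cases hab : (x, y) = (a, b)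
    · rw [Prod.mk.injEq] at hab
      obtain ⟨rfl, rfl⟩ := hab
      have h1 : (x, y) ∈ wsteps (y :: l) := by
        apply List.count_pos_iff.mp
        rw [List.count_cons_self] at h
        omega
      obtain ⟨A, C, hAC⟩ := split_one h1
      cases A with
      | nil => simp at hAC; exact absurd hAC.1.symm hxy
      | cons a0 A' =>
        rw [List.cons_append] at hAC
        obtain ⟨rfl, hl⟩ : y = a0 ∧ l = A' ++ x :: y :: C := by
          constructor
          · exact (List.cons.injEq .. ▸ hAC).1
          · exact (List.cons.injEq .. ▸ hAC).2
        exact ⟨[], A', C, by rw [hl]; simp⟩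
    · have h2 : 2 ≤ (wsteps (b :: l)).count (x, y) := by
        rw [List.count_cons, if_neg (by simpa using Ne.symm hab)] at h
        omega
      obtain ⟨A, M, C, hAC⟩ := split_two hxy h2
      exact ⟨a :: A, M, C, by rw [List.cons_append, ← hAC]⟩

lemma split_cross {x y : V} (hxy : x ≠ y) :
    ∀ {W : List V}, (x, y) ∈ wsteps W → (y, x) ∈ wsteps W →
    (∃ A M C, W = A ++ x :: y :: (M ++ x :: C) ∧ (y :: M).getLast? = some y) ∨
    (∃ A M C, W = A ++ y :: x :: (M ++ y :: C) ∧ (x :: M).getLast? = some x)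
  | [], h1, h2 => by simp at h1
  | [a], h1, h2 => by simp at h1
  | a :: b :: l, h1, h2 => by
    rw [wsteps_cons₂, List.mem_cons] at h1 h2
    rcases h1 with h1 | h1
    · rw [Prod.mk.injEq] at h1
      obtain ⟨rfl, rfl⟩ := h1
      have h2' : (y, x) ∈ wsteps (y :: l) := by
        rcases h2 with h2 | h2
        · rw [Prod.mk.injEq] at h2; exact absurd h2.1.symm hxy
        · exact h2
      obtain ⟨A, C, hAC⟩ := split_one h2'
      cases A with
      | nil =>
        left
        simp only [List.nil_append, List.cons.injEq] at hAC
        exact ⟨[], [], C, by simp [hAC.2], by simp⟩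
      | cons a0 A' =>
        left
        rw [List.cons_append] at hAC
        obtain ⟨rfl, hl⟩ : y = a0 ∧ l = A' ++ y :: x :: C := by
          constructor
          · exact (List.cons.injEq .. ▸ hAC).1
          · exact (List.cons.injEq .. ▸ hAC).2
        refine ⟨[], A' ++ [y], C, by rw [hl]; simp, ?_⟩
        rw [show y :: (A' ++ [y]) = (y :: A') ++ [y] by simp, List.getLast?_concat]
    · rcases h2 with h2 | h2
      · rw [Prod.mk.injEq] at h2
        obtain ⟨rfl, rfl⟩ := h2
        have h1' : (x, y) ∈ wsteps (x :: l) := h1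
        obtain ⟨A, C, hAC⟩ := split_one h1'
        cases A with
        | nil =>
          right
          simp only [List.nil_append, List.cons.injEq] at hAC
          exact ⟨[], [], C, by simp [hAC.2], by simp⟩
        | cons a0 A' =>
          right
          rw [List.cons_append] at hAC
          obtain ⟨rfl, hl⟩ : x = a0 ∧ l = A' ++ x :: y :: C := by
            constructor
            · exact (List.cons.injEq .. ▸ hAC).1
            · exact (List.cons.injEq .. ▸ hAC).2
          refine ⟨[], A' ++ [x], C, by rw [hl]; simp, ?_⟩
          rw [show x :: (A' ++ [x]) = (x :: A') ++ [x] by simp, List.getLast?_concat]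
      · rcases split_cross hxy h1 h2 with ⟨A, M, C, hAC, hL⟩ | ⟨A, M, C, hAC, hL⟩
        · exact Or.inl ⟨a :: A, M, C, by rw [List.cons_append, ← hAC], hL⟩
        · exact Or.inr ⟨a :: A, M, C, by rw [List.cons_append, ← hAC], hL⟩

end Helpers2

section Helpers3

set_option linter.unusedSectionVars false

variable {V : Type*} [DecidableEq V]

/-- The step predicate of `trav`. -/
def travP (x y : V) : V × V → Bool :=
  fun q => decide ((q.1 = x ∧ q.2 = y) ∨ (q.1 = y ∧ q.2 = x))

lemma trav_eq_scount (W : List V) (x y : V) : trav W x y = scount (travP x y) W := rfl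

lemma wlen_eq_scount (W : List V) : wlen W = scount (fun q => decide (q.1 ≠ q.2)) W := rfl

lemma travP_symm (x y : V) : ∀ u v, travP x y (u, v) = travP x y (v, u) := by
  intro u v
  unfold travP
  apply decide_eq_decide.mpr
  tauto

lemma trav_comm (W : List V) (x y : V) : trav W x y = trav W y x := by
  unfold trav
  apply List.countP_congr
  intro q _
  simp only [decide_eq_true_eq]
  tauto

lemma trav_count (W : List V) {x y : V} (hxy : x ≠ y) :
    trav W x y = (wsteps W).count (x, y) + (wsteps W).count (y, x) := by
  unfold trav
  induction wsteps W with
  | nil => simp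
  | cons q l ih =>
    obtain ⟨u, v⟩ := q
    rw [List.countP_cons, List.count_cons, List.count_cons, ih]
    by_cases h1 : u = x <;> by_cases h2 : v = y <;> by_cases h3 : u = y <;> by_cases h4 : v = x <;>
      simp_all [Prod.ext_iff] <;> omega

lemma trav_le_one_of_nodup {x y : V} : ∀ {P : List V}, P.Nodup → trav P x y ≤ 1
  | [], _ => by simp [trav]
  | [a], _ => by simp [trav]
  | a :: b :: l, hnd => by
    rw [trav_eq_scount, scount_cons₂, ← trav_eq_scount]
    by_cases hm : travP x y (a, b) = true
    · have hz : trav (b :: l) x y = 0 := by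
        unfold trav
        rw [List.countP_eq_zero]
        rintro ⟨u, v⟩ hq hdec
        have huv := mem_of_mem_wsteps hq
        have hm' := of_decide_eq_true hm
        have hdec' := of_decide_eq_true hdec
        have hna : a ∉ b :: l := (List.nodup_cons.mp hnd).1
        simp only at huv hm' hdec'
        rcases hm' with ⟨rfl, rfl⟩ | ⟨rfl, rfl⟩ <;> rcases hdec' with ⟨h1, h2⟩ | ⟨h1, h2⟩ <;>
          subst h1 <;> first
            | exact hna huv.1
            | (subst h2; exact hna huv.2)
      simp [hm, hz]
    · have := trav_le_one_of_nodup (x := x) (y := y) (List.nodup_cons.mp hnd).2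
      simp [hm]
      omega

/-- Step predicate for walk-validity violations (classical). -/
noncomputable def badB (G : SimpleGraph V) : V × V → Bool :=
  fun q => !(decide (q.1 = q.2) || @decide (G.Adj q.1 q.2) (Classical.propDecidable _))

lemma badB_symm (G : SimpleGraph V) : ∀ u v, badB G (u, v) = badB G (v, u) := by
  intro u v
  unfold badB
  simp only
  congr 1
  congr 1
  · exact decide_eq_decide.mpr eq_comm
  · exact decide_eq_decide.mpr ⟨fun h => h.symm, fun h => h.symm⟩

lemma isWalk_iff (G : SimpleGraph V) (W : List V) :
    IsWalk G W ↔ W ≠ [] ∧ scount (badB G) W = 0 := by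
  unfold IsWalk scount
  rw [List.countP_eq_zero]
  apply and_congr_right'
  apply forall_congr'
  intro q
  apply imp_congr_right
  intro _
  unfold badB
  rw [Bool.not_eq_true, Bool.not_eq_false', Bool.or_eq_true]
  simp only [decide_eq_true_eq]

lemma chain'_steps {R : V → V → Prop} :
    ∀ {l : List V}, l.Chain' R → ∀ q ∈ wsteps l, R q.1 q.2
  | [], _, q, hq => by simp at hq
  | [a], _, q, hq => by simp at hq
  | a :: b :: l, hc, q, hq => by
    rw [List.Chain', List.isChain_cons_cons] at hc
    rw [wsteps_cons₂, List.mem_cons] at hq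
    rcases hq with rfl | hq
    · exact hc.1
    · exact chain'_steps hc.2 q hq

lemma head?_pattern (A : List V) (b : V) (L L' : List V) :
    (A ++ b :: L).head? = (A ++ b :: L').head? := by
  cases A <;> simp

end Helpers3

section Helpers4

set_option linter.unusedSectionVars false

variable {V : Type*} [DecidableEq V]

lemma parity (G : SimpleGraph V) {x y : V} (hxy : x ≠ y)
    (hb : ¬ (G.deleteEdges {s(x, y)}).Reachable x y) :
    ∀ (W : List V) (hW : W ≠ []), (∀ q ∈ wsteps W, q.1 = q.2 ∨ G.Adj q.1 q.2) →
      (((G.deleteEdges {s(x, y)}).Reachable x (W.head hW) ↔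
        (G.deleteEdges {s(x, y)}).Reachable x (W.getLast hW)) ↔ Even (trav W x y))
  | [], hW, _ => absurd rfl hW
  | [a], _, _ => by simp [trav]
  | a :: b :: l, _, hadj => by
    set D := G.deleteEdges {s(x, y)} with hD
    have ih := parity G hxy hb (b :: l) (List.cons_ne_nil _ _)
      (fun q hq => hadj q (by rw [wsteps_cons₂]; exact List.mem_cons_of_mem _ hq))
    have hstep : a = b ∨ G.Adj a b := hadj (a, b) (by rw [wsteps_cons₂]; exact List.mem_cons_self)
    have hhead : (a :: b :: l).head (by simp) = a := rfl
    have hlast : (a :: b :: l).getLast (by simp) = (b :: l).getLast (by simp) :=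
      List.getLast_cons _
    rw [hhead, hlast, trav_eq_scount, scount_cons₂, ← trav_eq_scount]
    by_cases hm : (a = x ∧ b = y) ∨ (a = y ∧ b = x)
    · have hif : travP x y (a, b) = true := by
        unfold travP; exact decide_eq_true (by simpa using hm)
      rw [hif, if_pos rfl]
      have key : D.Reachable x a ↔ ¬ D.Reachable x b := by
        rcases hm with ⟨rfl, rfl⟩ | ⟨rfl, rfl⟩
        · exact iff_of_true (SimpleGraph.Reachable.refl _) hb
        · exact iff_of_false hb (not_not_intro (SimpleGraph.Reachable.refl _))
      rw [key]
      rw [add_comm, Nat.even_add_one, ← ih]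
      tauto
    · have hif : travP x y (a, b) = false := by
        unfold travP
        exact decide_eq_false (by simpa using hm)
      rw [hif]
      simp only [Bool.false_eq_true, if_false, zero_add]
      have key : D.Reachable x a ↔ D.Reachable x b := by
        rcases hstep with rfl | hadj'
        · exact Iff.rfl
        · have hDadj : D.Adj a b := by
            rw [hD, SimpleGraph.deleteEdges_adj]
            refine ⟨hadj', ?_⟩
            simp only [Set.mem_singleton_iff, Sym2.eq_iff]
            tauto
          exact ⟨fun h => h.trans hDadj.reachable, fun h => h.trans hDadj.symm.reachable⟩
      rw [key]
      exact ih

lemma scount_patternA (p : V × V → Bool) (A : List V) (x y : V) (M C : List V) :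
    scount p (A ++ x :: y :: (M ++ x :: y :: C)) =
      scount p (A ++ [x]) + scount p (y :: M ++ [x]) + scount p (y :: C)
        + (if p (x, y) then 1 else 0) + (if p (x, y) then 1 else 0) := by
  rw [scount_append_cons p A x, scount_cons₂,
    show y :: (M ++ x :: y :: C) = (y :: M) ++ x :: (y :: C) by simp,
    scount_append_cons p (y :: M) x (y :: C), scount_cons₂]
  omega

lemma scount_patternA' (p : V × V → Bool) (hp : ∀ u v, p (u, v) = p (v, u))
    (A : List V) (x y : V) (M C : List V) :
    scount p (A ++ x :: ((y :: M).reverse ++ y :: C)) =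
      scount p (A ++ [x]) + scount p (y :: M ++ [x]) + scount p (y :: C)
        + (if p (y, y) then 1 else 0) := by
  rw [scount_append_cons p A x,
    show x :: ((y :: M).reverse ++ y :: C) = (x :: (y :: M).reverse) ++ y :: C by simp,
    scount_append_cons p (x :: (y :: M).reverse) y C,
    show (x :: (y :: M).reverse) ++ [y] = (y :: ((y :: M) ++ [x])).reverse by simp,
    scount_reverse p hp,
    show y :: ((y :: M) ++ [x]) = y :: y :: (M ++ [x]) by simp,
    scount_cons₂]
  have : y :: (M ++ [x]) = (y :: M) ++ [x] := by simp
  rw [this]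
  omega

lemma scount_patternC1 (p : V × V → Bool) (A : List V) (x y : V) (M C : List V) :
    scount p (A ++ x :: y :: (M ++ x :: C)) =
      scount p (A ++ [x]) + scount p (x :: C) + (if p (x, y) then 1 else 0)
        + scount p ((y :: M) ++ [x]) := by
  rw [scount_append_cons p A x, scount_cons₂,
    show y :: (M ++ x :: C) = (y :: M) ++ x :: C by simp,
    scount_append_cons p (y :: M) x C]
  omega

lemma scount_patternC2 (p : V × V → Bool) (B : List V) (y : V) (M D : List V) :
    scount p (B ++ y :: (M ++ y :: D)) =
      scount p (B ++ [y]) + scount p ((y :: M) ++ [y]) + scount p (y :: D) := by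
  rw [scount_append_cons p B y,
    show y :: (M ++ y :: D) = (y :: M) ++ y :: D by simp,
    scount_append_cons p (y :: M) y D]
  omega

end Helpers4

section Helpers5

set_option linter.unusedSectionVars false

variable {V : Type*} [DecidableEq V]

lemma wlenP_symm : ∀ u v : V, (decide (u ≠ v)) = (decide (v ≠ u)) := fun u v =>
  decide_eq_decide.mpr ne_comm

lemma badB_eq_false_left {G : SimpleGraph V} (y : V) : badB G (y, y) = false := by
  unfold badB
  simp

lemma badB_eq_false_adj {G : SimpleGraph V} {x y : V} (h : G.Adj x y) : badB G (x, y) = false := by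
  unfold badB
  rw [Bool.not_eq_false', Bool.or_eq_true]
  simp only [decide_eq_true_eq]
  exact Or.inr h

lemma exchA {k : ℕ} (G : SimpleGraph V) (S : Fin k → List V) (hS : IsMinCover G S) (i : Fin k)
    {x y : V} (hadj : G.Adj x y) : (wsteps (S i)).count (x, y) ≤ 1 := by
  by_contra hc
  push_neg at hc
  obtain ⟨A, M, C, hW⟩ := split_two hadj.ne hc
  set W' := A ++ x :: ((y :: M).reverse ++ y :: C) with hW'
  have hkey : ∀ p : V × V → Bool, (∀ u v, p (u, v) = p (v, u)) →
      scount p (S i) + (if p (y, y) then 1 else 0)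
        = scount p W' + 2 * (if p (x, y) then 1 else 0) := by
    intro p hp
    rw [hW, hW', scount_patternA, scount_patternA' p hp]
    omega
  -- the new walk is two moves shorter
  have hwl : wlen (S i) = wlen W' + 2 := by
    have := hkey (fun q => decide (q.1 ≠ q.2)) (fun u v => wlenP_symm u v)
    rw [← wlen_eq_scount, ← wlen_eq_scount] at this
    simp only [ne_eq, decide_not, decide_eq_true_eq, Bool.not_eq_true', decide_eq_false_iff_not,
      not_not] at this
    rw [if_neg (not_not_intro trivial), if_pos hadj.ne] at this
    omega
  -- the new walk is a walk
  have hwalk : IsWalk G W' := by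
    have hw0 := (isWalk_iff G (S i)).mp (hS.1 i)
    have := hkey (badB G) (badB_symm G)
    rw [hw0.2, badB_eq_false_left, badB_eq_false_adj hadj] at this
    simp only [Bool.false_eq_true, if_false] at this
    rw [isWalk_iff]
    refine ⟨by simp [hW'], by omega⟩
  -- same vertices
  have hmem : ∀ v : V, v ∈ S i → v ∈ W' := by
    intro v hv
    rw [hW] at hv
    rw [hW']
    simp only [List.mem_append, List.mem_cons, List.mem_reverse] at *
    tauto
  set S2 := Function.update S i W' with hS2
  have hwalks : ∀ m, IsWalk G (S2 m) := by
    intro m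
    by_cases hm : m = i
    · subst hm; rw [hS2, Function.update_self]; exact hwalk
    · rw [hS2, Function.update_of_ne hm]; exact hS.1 m
  have hcov : Covers S2 := by
    intro v
    obtain ⟨m, hm⟩ := hS.2.1 v
    by_cases hmi : m = i
    · subst hmi; exact ⟨m, by rw [hS2, Function.update_self]; exact hmem v hm⟩
    · exact ⟨m, by rw [hS2, Function.update_of_ne hmi]; exact hm⟩
  have hheads : ∀ m, (S2 m).head? = (S m).head? := by
    intro m
    by_cases hm : m = i
    · subst hm
      rw [hS2, Function.update_self, hW', hW]
      exact head?_pattern A x _ _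
    · rw [hS2, Function.update_of_ne hm]
  have hmin := hS.2.2 S2 hwalks hcov hheads
  have hs1 : slen S2 = wlen W' + ∑ m ∈ univ.erase i, wlen (S m) := by
    unfold slen
    rw [← Finset.add_sum_erase _ (fun m => wlen (S2 m)) (mem_univ i)]
    congr 1
    · rw [hS2, Function.update_self]
    · apply Finset.sum_congr rfl
      intro m hm
      rw [hS2, Function.update_of_ne (Finset.mem_erase.mp hm).1]
  have hs2 : slen S = wlen (S i) + ∑ m ∈ univ.erase i, wlen (S m) := by
    unfold slen
    rw [← Finset.add_sum_erase _ (fun m => wlen (S m)) (mem_univ i)]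
  omega

end Helpers5

section Helpers6

set_option linter.unusedSectionVars false

variable {V : Type*} [DecidableEq V]

lemma exchC {k : ℕ} (G : SimpleGraph V) (S : Fin k → List V) (hS : IsMinCover G S)
    (i j : Fin k) (hji : j ≠ i) {x y : V} (hadj : G.Adj x y)
    (A M C : List V) (hW : S i = A ++ x :: y :: (M ++ x :: C))
    (hL : (y :: M).getLast? = some y) (hy : y ∈ S j) : False := by
  obtain ⟨B, D, hBD⟩ := List.append_of_mem hy
  set Wi' := A ++ x :: C with hWi'
  set Wj' := B ++ y :: (M ++ y :: D) with hWj'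
  have hkey : ∀ p : V × V → Bool,
      scount p (S i) + scount p (S j) + (if p (y, y) then 1 else 0)
        = scount p Wi' + scount p Wj' + (if p (x, y) then 1 else 0)
          + (if p (y, x) then 1 else 0) := by
    intro p
    rw [hW, hBD, hWi', hWj', scount_patternC1, scount_patternC2,
      scount_append_cons p A x C, scount_append_cons p B y D,
      scount_concat p hL x, scount_concat p hL y]
    omega
  have hwl : wlen (S i) + wlen (S j) = wlen Wi' + wlen Wj' + 2 := by
    have := hkey (fun q => decide (q.1 ≠ q.2))
    rw [← wlen_eq_scount, ← wlen_eq_scount, ← wlen_eq_scount, ← wlen_eq_scount] at this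
    simp only [ne_eq, decide_not, decide_eq_true_eq, Bool.not_eq_true', decide_eq_false_iff_not,
      not_not] at this
    rw [if_neg (not_not_intro trivial), if_pos hadj.ne, if_pos hadj.ne.symm] at this
    omega
  have hbadi := (isWalk_iff G (S i)).mp (hS.1 i)
  have hbadj := (isWalk_iff G (S j)).mp (hS.1 j)
  have hbad := hkey (badB G)
  rw [hbadi.2, hbadj.2, badB_eq_false_left] at hbad
  simp only [Bool.false_eq_true, if_false] at hbad
  have hwalki : IsWalk G Wi' := by
    rw [isWalk_iff]
    exact ⟨by simp [hWi'], by omega⟩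
  have hwalkj : IsWalk G Wj' := by
    rw [isWalk_iff]
    exact ⟨by simp [hWj'], by omega⟩
  have hmem1 : ∀ v : V, v ∈ S i → v ∈ Wi' ∨ v ∈ Wj' := by
    intro v hv
    rw [hW] at hv
    rw [hWi', hWj']
    simp only [List.mem_append, List.mem_cons] at *
    tauto
  have hmem2 : ∀ v : V, v ∈ S j → v ∈ Wj' := by
    intro v hv
    rw [hBD] at hv
    rw [hWj']
    simp only [List.mem_append, List.mem_cons] at *
    tauto
  set S2 := Function.update (Function.update S i Wi') j Wj' with hS2
  have hS2i : S2 i = Wi' := by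
    rw [hS2, Function.update_of_ne (fun h => hji h.symm), Function.update_self]
  have hS2j : S2 j = Wj' := by rw [hS2, Function.update_self]
  have hS2other : ∀ m, m ≠ i → m ≠ j → S2 m = S m := by
    intro m h1 h2
    rw [hS2, Function.update_of_ne h2, Function.update_of_ne h1]
  have hwalks : ∀ m, IsWalk G (S2 m) := by
    intro m
    by_cases h1 : m = j
    · subst h1; rw [hS2j]; exact hwalkj
    by_cases h2 : m = i
    · subst h2; rw [hS2i]; exact hwalki
    · rw [hS2other m h2 h1]; exact hS.1 m
  have hcov : Covers S2 := by
    intro v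
    obtain ⟨m, hm⟩ := hS.2.1 v
    by_cases h1 : m = j
    · subst h1; exact ⟨m, by rw [hS2j]; exact hmem2 v hm⟩
    by_cases h2 : m = i
    · subst h2
      rcases hmem1 v hm with h | h
      · exact ⟨m, by rw [hS2i]; exact h⟩
      · exact ⟨j, by rw [hS2j]; exact h⟩
    · exact ⟨m, by rw [hS2other m h2 h1]; exact hm⟩
  have hheads : ∀ m, (S2 m).head? = (S m).head? := by
    intro m
    by_cases h1 : m = j
    · subst h1
      rw [hS2j, hWj', hBD]
      exact head?_pattern B y _ _
    by_cases h2 : m = i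
    · subst h2
      rw [hS2i, hWi', hW]
      exact head?_pattern A x _ _
    · rw [hS2other m h2 h1]
  have hmin := hS.2.2 S2 hwalks hcov hheads
  have hsum : ∀ f : Fin k → ℕ,
      ∑ m, f m = f i + f j + ∑ m ∈ (univ.erase i).erase j, f m := by
    intro f
    rw [← Finset.add_sum_erase _ f (mem_univ i),
      ← Finset.add_sum_erase _ f (Finset.mem_erase.mpr ⟨hji, mem_univ j⟩)]
    omega
  have hs1 : slen S = wlen (S i) + wlen (S j) + ∑ m ∈ (univ.erase i).erase j, wlen (S m) :=
    hsum (fun m => wlen (S m))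
  have hs2 : slen S2 = wlen Wi' + wlen Wj' + ∑ m ∈ (univ.erase i).erase j, wlen (S m) := by
    rw [show slen S2 = ∑ m, wlen (S2 m) from rfl, hsum (fun m => wlen (S2 m)), hS2i, hS2j]
    congr 1
    apply Finset.sum_congr rfl
    intro m hm
    rw [hS2other m (Finset.mem_erase.mp (Finset.mem_erase.mp hm).2).1 (Finset.mem_erase.mp hm).1]
  rw [hs1, hs2] at hmin
  omega

end Helpers6


/-- Structure lemma (parts (a),(b)): in a minimum-length covering strategy for a tree,
each edge used by robot i is traversed once or twice by it; the once-traversed edges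
form a path; and each twice-traversed edge of robot i is traversed by no other robot. -/
theorem stmt3 {V : Type*} [Fintype V] [DecidableEq V] (G : SimpleGraph V) (hT : G.IsTree)
    {k : ℕ} (S : Fin k → List V) (hS : IsMinCover G S) :
    ∀ i : Fin k,
      (∀ x y : V, G.Adj x y → trav (S i) x y ≤ 2) ∧
      (∃ P : List V, P.Nodup ∧ P.Chain' G.Adj ∧ (P.head? = (S i).head?) ∧
        ∀ x y : V, G.Adj x y → (trav (S i) x y = 1 ↔ trav P x y = 1)) ∧
      (∀ x y : V, G.Adj x y → trav (S i) x y = 2 →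
        ∀ j : Fin k, j ≠ i → trav (S j) x y = 0) := by
  intro i
  have hWalk := hS.1 i
  have hne : S i ≠ [] := hWalk.1
  have hcount : ∀ x y : V, G.Adj x y → (wsteps (S i)).count (x, y) ≤ 1 :=
    fun x y h => exchA G S hS i h
  have parta : ∀ x y : V, G.Adj x y → trav (S i) x y ≤ 2 := by
    intro x y h
    rw [trav_count _ h.ne]
    have h1 := hcount x y h
    have h2 := hcount y x h.symm
    omega
  refine ⟨parta, ?_, ?_⟩
  · set h0 := (S i).head hne with hh0
    set l0 := (S i).getLast hne with hl0
    obtain ⟨w0⟩ := hT.isConnected.preconnected h0 l0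
    set P := w0.toPath.1.support with hP
    have hPnodup : P.Nodup := w0.toPath.2.support_nodup
    have hPchain : P.Chain' G.Adj := SimpleGraph.Walk.isChain_adj_support _
    have hPne : P ≠ [] := SimpleGraph.Walk.support_ne_nil _
    have hPhead : P.head hPne = h0 := SimpleGraph.Walk.head_support _
    have hPlast : P.getLast hPne = l0 := SimpleGraph.Walk.getLast_support _
    refine ⟨P, hPnodup, hPchain, ?_, ?_⟩
    · rw [List.head?_eq_head hPne, List.head?_eq_head hne, hPhead]
    · intro x y hadj
      have hbr : ¬ (G.deleteEdges {s(x, y)}).Reachable x y := by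
        have hb := (SimpleGraph.isAcyclic_iff_forall_adj_isBridge.mp hT.IsAcyclic) hadj
        rw [SimpleGraph.isBridge_iff] at hb
        exact hb
      have hp1 := parity G hadj.ne hbr (S i) hne hWalk.2
      have hp2 := parity G hadj.ne hbr P hPne (fun q hq => Or.inr (chain'_steps hPchain q hq))
      rw [hPhead, hPlast] at hp2
      have hle2 := parta x y hadj
      have hle1 : trav P x y ≤ 1 := trav_le_one_of_nodup hPnodup
      have heven : Even (trav (S i) x y) ↔ Even (trav P x y) := by
        rw [← hp1, ← hp2]
      rw [Nat.even_iff, Nat.even_iff] at heven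
      omega
  · intro x y hadj h2 j hji
    by_contra hc
    have hmemj : x ∈ S j ∧ y ∈ S j := by
      have hpos : 0 < (wsteps (S j)).countP (travP x y) := by
        have : trav (S j) x y = (wsteps (S j)).countP (travP x y) := rfl
        omega
      obtain ⟨q, hq, hq2⟩ := List.countP_pos_iff.mp hpos
      have hmem := mem_of_mem_wsteps hq
      have := of_decide_eq_true hq2
      rcases this with ⟨hh1, hh2⟩ | ⟨hh1, hh2⟩
      · exact ⟨hh1 ▸ hmem.1, hh2 ▸ hmem.2⟩
      · exact ⟨hh2 ▸ hmem.2, hh1 ▸ hmem.1⟩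
    have hcnt := trav_count (S i) hadj.ne
    have hx1 : (x, y) ∈ wsteps (S i) := by
      apply List.count_pos_iff.mp
      have h1 := hcount x y hadj
      have h2' := hcount y x hadj.symm
      omega
    have hy1 : (y, x) ∈ wsteps (S i) := by
      apply List.count_pos_iff.mp
      have h1 := hcount x y hadj
      have h2' := hcount y x hadj.symm
      omega
    rcases split_cross hadj.ne hx1 hy1 with ⟨A, M, C, hW, hL⟩ | ⟨A, M, C, hW, hL⟩
    · exact exchC G S hS i j hji hadj A M C hW hL hmemj.2
    · exact exchC G S hS i j hji hadj.symm A M C hW hL hmemj.1
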